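/- For every integer m ≥ 0, the code C(m, m, m, m, m) is an optimal Hermitian LCD quaternary [5m+2, 2, 4m+1] code. -/

import Mathlib

open Finset

/-- The finite field with four elements. -/
abbrev F4 : Type := GaloisField 2 2

noncomputable instance : Fintype F4 := Fintype.ofFinite F4

lemma F4.card_eq : Fintype.card F4 = 4 := by
  simpa using GaloisField.card 2 2 (by norm_num)

lemma F4.exists_omega : ∃ x : F4, x ^ 2 + x + 1 = 0 := by
  classical
  obtain ⟨x, hx0, hx1⟩ : ∃ x : F4, x ≠ 0 ∧ x ≠ 1 := by
    by_contra h
    push_neg at h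
    have hsub : (Finset.univ : Finset F4) ⊆ {0, 1} := by
      intro x _
      rcases eq_or_ne x 0 with h0 | h0
      · simp [h0]
      · simp [h x h0]
    have h1 := Finset.card_le_card hsub
    have h2 : ({0, 1} : Finset F4).card ≤ 2 := (Finset.card_insert_le _ _).trans (by simp)
    have h3 : (Finset.univ : Finset F4).card = 4 := F4.card_eq
    omega
  refine ⟨x, ?_⟩
  have hx : x ^ Fintype.card F4 = x := FiniteField.pow_card x
  rw [F4.card_eq] at hx
  have hmul : x * (x - 1) * (x ^ 2 + x + 1) = 0 := by
    have : x * (x - 1) * (x ^ 2 + x + 1) = x ^ 4 - x := by ring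
    rw [this, hx, sub_self]
  rcases mul_eq_zero.mp hmul with h | h
  · rcases mul_eq_zero.mp h with h | h
    · exact absurd h hx0
    · exact absurd (sub_eq_zero.mp h) hx1
  · exact h

/-- A fixed root of `X² + X + 1` in `F₄`. -/
noncomputable def ω4 : F4 := Classical.choose F4.exists_omega

lemma ω4_spec : ω4 ^ 2 + ω4 + 1 = 0 := Classical.choose_spec F4.exists_omega

open scoped Classical in
/-- Hamming weight of a vector. -/
noncomputable def wt {n : ℕ} (x : Fin n → F4) : ℕ :=
  (Finset.univ.filter fun i => x i ≠ 0).card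

/-- `C` is a code with minimum (nonzero) weight `d`. -/
noncomputable def hasMinWeight {n : ℕ} (C : Submodule F4 (Fin n → F4)) (d : ℕ) : Prop :=
  (∀ x ∈ C, x ≠ 0 → d ≤ wt x) ∧ ∃ x ∈ C, x ≠ 0 ∧ wt x = d

/-- The Hermitian inner product on `F₄ⁿ`; the conjugate of `x` is `x²`. -/
noncomputable def hermInner {n : ℕ} (u v : Fin n → F4) : F4 := ∑ i, u i * (v i) ^ 2

/-- The Hermitian dual code. -/
noncomputable def hermDual {n : ℕ} (C : Submodule F4 (Fin n → F4)) : Submodule F4 (Fin n → F4) where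
  carrier := {x | ∀ y ∈ C, hermInner x y = 0}
  zero_mem' := by intro y hy; simp [hermInner]
  add_mem' := by
    intro a b ha hb y hy
    have := ha y hy
    have := hb y hy
    simp only [hermInner, Pi.add_apply, add_mul, Finset.sum_add_distrib] at *
    simp [*]
  smul_mem' := by
    intro c a ha y hy
    have h := ha y hy
    simp only [hermInner, Pi.smul_apply, smul_eq_mul, mul_assoc, ← Finset.mul_sum] at *
    simp [h]

/-- `C` is a Hermitian linear complementary dual code. -/
noncomputable def IsHermLCD {n : ℕ} (C : Submodule F4 (Fin n → F4)) : Prop :=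
  C ⊓ hermDual C = ⊥

/-- The monomial linear map given by a permutation of coordinates followed by a
multiplication of each coordinate by a scalar. -/
noncomputable def monoMap {n : ℕ} (σ : Equiv.Perm (Fin n)) (s : Fin n → F4) :
    (Fin n → F4) →ₗ[F4] (Fin n → F4) where
  toFun x := fun i => s i * x (σ i)
  map_add' a b := by funext i; simp [mul_add]
  map_smul' c a := by funext i; simp [smul_eq_mul]; ring

/-- Two codes are equivalent if one is obtained from the other by a permutation of the
coordinates and multiplication of coordinates by nonzero scalars. -/
noncomputable def codeEquiv {n : ℕ} (C C' : Submodule F4 (Fin n → F4)) : Prop :=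
  ∃ (σ : Equiv.Perm (Fin n)) (s : Fin n → F4),
    (∀ i, s i ≠ 0) ∧ Submodule.map (monoMap σ s) C = C'

/-- First row of the generator matrix `G(a₁, a₂, a₃, a₄, a₅)`. -/
noncomputable def row1 (n a₁ : ℕ) : Fin n → F4 := fun i =>
  if i.val = 0 then 1
  else if i.val < 2 + a₁ then 0
  else 1

/-- Second row of the generator matrix `G(a₁, a₂, a₃, a₄, a₅)`. -/
noncomputable def row2 (n a₁ a₂ a₃ a₄ : ℕ) : Fin n → F4 := fun i =>
  if i.val = 0 then 0
  else if i.val < 2 + a₁ then 1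
  else if i.val < 2 + a₁ + a₂ then 0
  else if i.val < 2 + a₁ + a₂ + a₃ then 1
  else if i.val < 2 + a₁ + a₂ + a₃ + a₄ then ω4
  else ω4 ^ 2

set_option linter.unusedVariables false in
/-- The code `C(a₁, a₂, a₃, a₄, a₅)`, of length `n = 2 + a₁ + a₂ + a₃ + a₄ + a₅`:
the span of the rows of the generator matrix `G(a₁, a₂, a₃, a₄, a₅)` whose columns are
`(1,0)ᵀ`, `(0,1)ᵀ`, `a₁` columns `(0,1)ᵀ`, `a₂` columns `(1,0)ᵀ`, `a₃` columns `(1,1)ᵀ`,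
`a₄` columns `(1,ω)ᵀ` and `a₅` columns `(1,ω²)ᵀ`. -/
noncomputable def Ccode (n a₁ a₂ a₃ a₄ a₅ : ℕ) : Submodule F4 (Fin n → F4) :=
  Submodule.span F4 {row1 n a₁, row2 n a₁ a₂ a₃ a₄}

/-- The largest minimum weight among Hermitian LCD `[n,2]` codes. -/
def optimalDist (n : ℕ) : ℕ :=
  if n % 5 = 1 ∨ n % 5 = 2 ∨ n % 5 = 3 then 4 * n / 5 else 4 * n / 5 - 1

/-- `C` is an optimal Hermitian LCD `[n, 2, d]` code. -/
noncomputable def IsOptimalLCD (n d : ℕ) (C : Submodule F4 (Fin n → F4)) : Prop :=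
  Module.finrank F4 C = 2 ∧ hasMinWeight C d ∧ IsHermLCD C ∧ d = optimalDist n

/-- The linear map appending a zero coordinate: `x ↦ (x, 0)`. -/
noncomputable def extendZero (m : ℕ) : (Fin m → F4) →ₗ[F4] (Fin (m + 1) → F4) where
  toFun x := Fin.snoc x 0
  map_add' a b := by
    funext i
    refine Fin.lastCases ?_ ?_ i <;> simp
  map_smul' c a := by
    funext i
    refine Fin.lastCases ?_ ?_ i <;> simp


/-! ### Auxiliary lemmas -/

section Aux

lemma F4.two_eq_zero : (2 : F4) = 0 := by simpa using CharP.cast_eq_zero F4 2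

lemma ω4_ne_zero : ω4 ≠ 0 := by
  intro h
  have := ω4_spec
  rw [h] at this
  simp at this

lemma ω4_ne_one : ω4 ≠ 1 := by
  intro h
  have hs := ω4_spec
  rw [h] at hs
  have : (1 : F4) = 0 := by linear_combination hs - F4.two_eq_zero
  exact one_ne_zero this

lemma ω4_sq_ne_one : ω4 ^ 2 ≠ 1 := by
  intro h
  have : ω4 = 0 := by linear_combination ω4_spec - h - F4.two_eq_zero
  exact ω4_ne_zero this

lemma ω4_sq_ne_omega : ω4 ^ 2 ≠ ω4 := by
  intro h
  have : ω4 * (ω4 - 1) = 0 := by linear_combination h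
  rcases mul_eq_zero.mp this with h' | h'
  · exact ω4_ne_zero h'
  · exact ω4_ne_one (by linear_combination h')

lemma ω4_cube : ω4 ^ 3 = 1 := by linear_combination (ω4 - 1) * ω4_spec

lemma ω4_sq_ne_zero : ω4 ^ 2 ≠ 0 := pow_ne_zero 2 ω4_ne_zero

/-- Splitting a sum over `range (5*m+2)` into the six blocks. -/
lemma sum_blocks {M : Type*} [AddCommMonoid M] (m : ℕ) (f : ℕ → M)
    (c0 c1 c2 c3 c4 c5 : M)
    (h0 : f 0 = c0)
    (h1 : ∀ i, 1 ≤ i → i < 2 + m → f i = c1)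
    (h2 : ∀ i, 2 + m ≤ i → i < 2 + m + m → f i = c2)
    (h3 : ∀ i, 2 + m + m ≤ i → i < 2 + m + m + m → f i = c3)
    (h4 : ∀ i, 2 + m + m + m ≤ i → i < 2 + m + m + m + m → f i = c4)
    (h5 : ∀ i, 2 + m + m + m + m ≤ i → i < 5 * m + 2 → f i = c5) :
    ∑ i ∈ Finset.range (5 * m + 2), f i
      = c0 + (m + 1) • c1 + m • c2 + m • c3 + m • c4 + m • c5 := by
  have key : ∀ lo hi c, (∀ i, lo ≤ i → i < hi → f i = c) →
      ∑ i ∈ Finset.Ico lo hi, f i = (hi - lo) • c := by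
    intro lo hi c h
    rw [Finset.sum_congr rfl fun i hi' =>
      h i (Finset.mem_Ico.mp hi').1 (Finset.mem_Ico.mp hi').2,
      Finset.sum_const, Nat.card_Ico]
  have h0' : ∀ i, 0 ≤ i → i < 1 → f i = c0 := by
    intro i _ hi
    have : i = 0 := by omega
    rw [this, h0]
  rw [Finset.range_eq_Ico,
    ← Finset.sum_Ico_consecutive f (by omega : (0:ℕ) ≤ 1) (by omega : 1 ≤ 5*m+2),
    ← Finset.sum_Ico_consecutive f (by omega : (1:ℕ) ≤ 2+m) (by omega : 2+m ≤ 5*m+2),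
    ← Finset.sum_Ico_consecutive f (by omega : 2+m ≤ 2+m+m) (by omega : 2+m+m ≤ 5*m+2),
    ← Finset.sum_Ico_consecutive f (by omega : 2+m+m ≤ 2+m+m+m) (by omega : 2+m+m+m ≤ 5*m+2),
    ← Finset.sum_Ico_consecutive f (by omega : 2+m+m+m ≤ 2+m+m+m+m)
        (by omega : 2+m+m+m+m ≤ 5*m+2),
    key 0 1 c0 h0', key 1 (2+m) c1 h1, key (2+m) (2+m+m) c2 h2,
    key (2+m+m) (2+m+m+m) c3 h3, key (2+m+m+m) (2+m+m+m+m) c4 h4,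
    key (2+m+m+m+m) (5*m+2) c5 h5]
  have e0 : 1 - 0 = 1 := rfl
  have e1 : 2+m-1 = m+1 := by omega
  have e2 : 2+m+m-(2+m) = m := by omega
  have e3 : 2+m+m+m-(2+m+m) = m := by omega
  have e4 : 2+m+m+m+m-(2+m+m+m) = m := by omega
  have e5 : 5*m+2-(2+m+m+m+m) = m := by omega
  rw [e0, e1, e2, e3, e4, e5, one_smul]
  abel

/-- The generic codeword of `C(m,m,m,m,m)` as a function of the coordinate index. -/
noncomputable def colF (m : ℕ) (a b : F4) : ℕ → F4 := fun j =>
  if j = 0 then a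
  else if j < 2 + m then b
  else if j < 2 + m + m then a
  else if j < 2 + m + m + m then a + b
  else if j < 2 + m + m + m + m then a + b * ω4
  else a + b * ω4 ^ 2

lemma comb_apply (m : ℕ) (a b : F4) (i : Fin (5 * m + 2)) :
    (a • row1 (5 * m + 2) m + b • row2 (5 * m + 2) m m m m) i = colF m a b i.val := by
  simp only [Pi.add_apply, Pi.smul_apply, smul_eq_mul, row1, row2, colF]
  split_ifs <;> ring

lemma colF_b0 (m : ℕ) (a b : F4) : colF m a b 0 = a := by simp [colF]

lemma colF_b1 (m : ℕ) (a b : F4) :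
    ∀ i, 1 ≤ i → i < 2 + m → colF m a b i = b := by
  intro i h1 h2
  unfold colF
  rw [if_neg (by omega), if_pos h2]

lemma colF_b2 (m : ℕ) (a b : F4) :
    ∀ i, 2 + m ≤ i → i < 2 + m + m → colF m a b i = a := by
  intro i h1 h2
  unfold colF
  rw [if_neg (by omega), if_neg (by omega), if_pos h2]

lemma colF_b3 (m : ℕ) (a b : F4) :
    ∀ i, 2 + m + m ≤ i → i < 2 + m + m + m → colF m a b i = a + b := by
  intro i h1 h2
  unfold colF
  rw [if_neg (by omega), if_neg (by omega), if_neg (by omega), if_pos h2]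

lemma colF_b4 (m : ℕ) (a b : F4) :
    ∀ i, 2 + m + m + m ≤ i → i < 2 + m + m + m + m → colF m a b i = a + b * ω4 := by
  intro i h1 h2
  unfold colF
  rw [if_neg (by omega), if_neg (by omega), if_neg (by omega), if_neg (by omega), if_pos h2]

lemma colF_b5 (m : ℕ) (a b : F4) :
    ∀ i, 2 + m + m + m + m ≤ i → i < 5 * m + 2 → colF m a b i = a + b * ω4 ^ 2 := by
  intro i h1 _
  unfold colF
  rw [if_neg (by omega), if_neg (by omega), if_neg (by omega), if_neg (by omega),
    if_neg (by omega)]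

open scoped Classical in
/-- Weight of the generic codeword. -/
lemma wt_comb (m : ℕ) (a b : F4) :
    wt (a • row1 (5 * m + 2) m + b • row2 (5 * m + 2) m m m m)
      = (if a = 0 then 0 else 1) + (m + 1) • (if b = 0 then 0 else 1)
        + m • (if a = 0 then 0 else 1) + m • (if a + b = 0 then 0 else 1)
        + m • (if a + b * ω4 = 0 then 0 else 1)
        + m • (if a + b * ω4 ^ 2 = 0 then 0 else 1) := by
  rw [wt, Finset.card_filter]
  have hre : ∀ i : Fin (5 * m + 2),
      (if (a • row1 (5 * m + 2) m + b • row2 (5 * m + 2) m m m m) i ≠ 0 then 1 else 0)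
        = (fun j => if colF m a b j = 0 then 0 else 1) i.val := by
    intro i
    rw [comb_apply, ite_not]
  rw [Finset.sum_congr rfl fun i _ => hre i,
    Fin.sum_univ_eq_sum_range (fun j => if colF m a b j = 0 then 0 else 1) (5 * m + 2)]
  exact sum_blocks m _ _ _ _ _ _ _
    (by rw [colF_b0])
    (fun i h1 h2 => by rw [colF_b1 m a b i h1 h2])
    (fun i h1 h2 => by rw [colF_b2 m a b i h1 h2])
    (fun i h1 h2 => by rw [colF_b3 m a b i h1 h2])
    (fun i h1 h2 => by rw [colF_b4 m a b i h1 h2])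
    (fun i h1 h2 => by rw [colF_b5 m a b i h1 h2])

lemma herm_comb (m : ℕ) (a b c d : F4) :
    hermInner (a • row1 (5 * m + 2) m + b • row2 (5 * m + 2) m m m m)
      (c • row1 (5 * m + 2) m + d • row2 (5 * m + 2) m m m m)
      = a * c ^ 2 + b * d ^ 2 := by
  rw [hermInner]
  have hre : ∀ i : Fin (5 * m + 2),
      (a • row1 (5 * m + 2) m + b • row2 (5 * m + 2) m m m m) i
        * ((c • row1 (5 * m + 2) m + d • row2 (5 * m + 2) m m m m) i) ^ 2
      = (fun j => colF m a b j * (colF m c d j) ^ 2) i.val := by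
    intro i
    rw [comb_apply, comb_apply]
  rw [Finset.sum_congr rfl fun i _ => hre i,
    Fin.sum_univ_eq_sum_range (fun j => colF m a b j * (colF m c d j) ^ 2) (5 * m + 2),
    sum_blocks m _ (a * c ^ 2) (b * d ^ 2) (a * c ^ 2) ((a+b) * (c+d) ^ 2)
      ((a + b * ω4) * (c + d * ω4) ^ 2) ((a + b * ω4 ^ 2) * (c + d * ω4 ^ 2) ^ 2)
      (by rw [colF_b0, colF_b0])
      (fun i h1 h2 => by rw [colF_b1 m a b i h1 h2, colF_b1 m c d i h1 h2])
      (fun i h1 h2 => by rw [colF_b2 m a b i h1 h2, colF_b2 m c d i h1 h2])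
      (fun i h1 h2 => by rw [colF_b3 m a b i h1 h2, colF_b3 m c d i h1 h2])
      (fun i h1 h2 => by rw [colF_b4 m a b i h1 h2, colF_b4 m c d i h1 h2])
      (fun i h1 h2 => by rw [colF_b5 m a b i h1 h2, colF_b5 m c d i h1 h2])]
  simp only [nsmul_eq_mul, Nat.cast_add, Nat.cast_one]
  linear_combination ((m:F4) * (b*d^2*(ω4^3+2) + a*d^2*ω4 + 2*b*c*d*ω4)) * ω4_cube
    + ((m:F4) * (2*a*c*d + a*d^2 + b*c^2 + 2*b*c*d)) * ω4_spec
    + ((m:F4) * (2*a*c^2 + 2*b*d^2)) * F4.two_eq_zero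

end Aux

/-- `C(m, m, m, m, m)` is an optimal Hermitian LCD `[5m + 2, 2, 4m + 1]`
code for every `m ≥ 0`. -/
theorem stmt15 (m : ℕ) :
    IsOptimalLCD (5 * m + 2) (4 * m + 1) (Ccode (5 * m + 2) m m m m m) := by
  classical
  have hmem : ∀ a b : F4,
      a • row1 (5*m+2) m + b • row2 (5*m+2) m m m m ∈ Ccode (5*m+2) m m m m m := by
    intro a b
    show _ ∈ Submodule.span F4 {row1 (5*m+2) m, row2 (5*m+2) m m m m}
    exact Submodule.mem_span_pair.mpr ⟨a, b, rfl⟩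
  have hz : ∀ a b : F4, a • row1 (5*m+2) m + b • row2 (5*m+2) m m m m = 0 →
      a = 0 ∧ b = 0 := by
    intro a b h
    have h1 : hermInner (a • row1 (5*m+2) m + b • row2 (5*m+2) m m m m)
        ((1:F4) • row1 (5*m+2) m + (0:F4) • row2 (5*m+2) m m m m) = 0 := by
      rw [h]; simp [hermInner]
    have h2 : hermInner (a • row1 (5*m+2) m + b • row2 (5*m+2) m m m m)
        ((0:F4) • row1 (5*m+2) m + (1:F4) • row2 (5*m+2) m m m m) = 0 := by
      rw [h]; simp [hermInner]
    rw [herm_comb] at h1 h2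
    exact ⟨by simpa using h1, by simpa using h2⟩
  unfold IsOptimalLCD hasMinWeight
  refine ⟨?_, ⟨?_, ?_⟩, ?_, ?_⟩
  · -- finrank = 2
    have hli : LinearIndependent F4 ![row1 (5*m+2) m, row2 (5*m+2) m m m m] := by
      rw [LinearIndependent.pair_iff]
      intro s t hst
      exact hz s t hst
    have hr := finrank_span_eq_card hli
    have hrange : Set.range ![row1 (5*m+2) m, row2 (5*m+2) m m m m]
        = {row1 (5*m+2) m, row2 (5*m+2) m m m m} := by
      ext x
      simp only [Set.mem_range, Fin.exists_fin_two, Matrix.cons_val_zero, Matrix.cons_val_one,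
        Matrix.head_cons, Set.mem_insert_iff, Set.mem_singleton_iff, eq_comm]
    rw [hrange] at hr
    unfold Ccode
    convert hr using 2 <;> simp
  · -- lower bound on weights
    intro x hx hx0
    rw [Ccode] at hx
    obtain ⟨a, b, hab⟩ := Submodule.mem_span_pair.mp hx
    have hne : ¬(a = 0 ∧ b = 0) := by
      rintro ⟨ha, hb⟩
      apply hx0
      rw [← hab, ha, hb]
      simp
    rw [← hab, wt_comb]
    by_cases ha : a = 0
    · have hb : b ≠ 0 := fun hb => hne ⟨ha, hb⟩
      subst ha
      have h3 : ¬((0:F4) + b = 0) := by simpa using hb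
      have h4 : ¬((0:F4) + b * ω4 = 0) := by simpa using mul_ne_zero hb ω4_ne_zero
      have h5 : ¬((0:F4) + b * ω4 ^ 2 = 0) := by simpa using mul_ne_zero hb ω4_sq_ne_zero
      rw [if_pos rfl, if_neg hb, if_neg h3, if_neg h4, if_neg h5]
      simp only [smul_eq_mul, mul_zero, mul_one]
      omega
    · by_cases hb : b = 0
      · subst hb
        have h3 : ¬(a + 0 = 0) := by simpa using ha
        have h4 : ¬(a + 0 * ω4 = 0) := by simpa using ha
        have h5 : ¬(a + 0 * ω4 ^ 2 = 0) := by simpa using ha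
        rw [if_neg ha, if_pos rfl, if_neg h3, if_neg h4, if_neg h5]
        simp only [smul_eq_mul, mul_zero, mul_one]
        omega
      · rw [if_neg ha, if_neg hb]
        by_cases h3 : a + b = 0
        · have h4 : ¬(a + b * ω4 = 0) := by
            intro h4
            have hmul : b * (ω4 - 1) = 0 := by linear_combination h4 - h3
            rcases mul_eq_zero.mp hmul with h | h
            · exact hb h
            · exact ω4_ne_one (by linear_combination h)
          have h5 : ¬(a + b * ω4 ^ 2 = 0) := by
            intro h5
            have hmul : b * (ω4 ^ 2 - 1) = 0 := by linear_combination h5 - h3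
            rcases mul_eq_zero.mp hmul with h | h
            · exact hb h
            · exact ω4_sq_ne_one (by linear_combination h)
          rw [if_pos h3, if_neg h4, if_neg h5]
          simp only [smul_eq_mul, mul_zero, mul_one]
          omega
        · by_cases h4 : a + b * ω4 = 0
          · have h5 : ¬(a + b * ω4 ^ 2 = 0) := by
              intro h5
              have hmul : b * (ω4 ^ 2 - ω4) = 0 := by linear_combination h5 - h4
              rcases mul_eq_zero.mp hmul with h | h
              · exact hb h
              · exact ω4_sq_ne_omega (by linear_combination h)
            rw [if_neg h3, if_pos h4, if_neg h5]
            simp only [smul_eq_mul, mul_zero, mul_one]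
            omega
          · by_cases h5 : a + b * ω4 ^ 2 = 0
            · rw [if_neg h3, if_neg h4, if_pos h5]
              simp only [smul_eq_mul, mul_zero, mul_one]
              omega
            · rw [if_neg h3, if_neg h4, if_neg h5]
              simp only [smul_eq_mul, mul_zero, mul_one]
              omega
  · -- a codeword of weight exactly 4m+1
    refine ⟨(1:F4) • row1 (5*m+2) m + (0:F4) • row2 (5*m+2) m m m m, hmem 1 0, ?_, ?_⟩
    · intro h
      have h0 := congrFun h ⟨0, by omega⟩
      rw [comb_apply] at h0
      simp [colF] at h0
    · rw [wt_comb]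
      have e1 : (1:F4) ≠ 0 := one_ne_zero
      have e3 : ¬((1:F4) + 0 = 0) := by simpa using e1
      have e4 : ¬((1:F4) + 0 * ω4 = 0) := by simpa using e1
      have e5 : ¬((1:F4) + 0 * ω4 ^ 2 = 0) := by simpa using e1
      rw [if_neg e1, if_pos rfl, if_neg e3, if_neg e4, if_neg e5]
      simp only [smul_eq_mul, mul_zero, mul_one]
      omega
  · -- Hermitian LCD
    rw [IsHermLCD, eq_bot_iff]
    intro x hx
    obtain ⟨hxC, hxD⟩ := Submodule.mem_inf.mp hx
    have hD : ∀ y ∈ Ccode (5*m+2) m m m m m, hermInner x y = 0 := hxD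
    have hCx := hxC
    rw [Ccode] at hCx
    obtain ⟨a, b, hab⟩ := Submodule.mem_span_pair.mp hCx
    have h1 := hD _ (hmem 1 0)
    have h2 := hD _ (hmem 0 1)
    rw [← hab, herm_comb] at h1 h2
    have ha : a = 0 := by simpa using h1
    have hbz : b = 0 := by simpa using h2
    rw [Submodule.mem_bot, ← hab, ha, hbz]
    simp
  · -- optimal distance
    unfold optimalDist
    split_ifs with h <;> omega
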